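/- (Reverse waterfilling optimality.) Let n ≥ 1, let λ_1,…,λ_n > 0, let σ² > 0, and let τ > 0. Define R*(τ) = (1/(2n))·Σ_{i=1}^n log₂ max(1, λ_i/τ) and D*(τ) = (σ²/n)·Σ_{i=1}^n min(λ_i, τ). Then for every choice of D_1,…,D_n with 0 < D_i ≤ σ² for all i and (1/(2n))·Σ_{i=1}^n log₂(σ²/D_i) ≤ R*(τ), one has (1/n)·Σ_{i=1}^n λ_i D_i ≥ D*(τ). Moreover, the choice D_i = σ²·min(1, τ/λ_i) satisfies 0 < D_i ≤ σ², achieves (1/(2n))·Σ_i log₂(σ²/D_i) = R*(τ), and attains (1/n)·Σ_i λ_i D_i = D*(τ). -/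

import Mathlib

open Finset Real

lemma percoord_rw (lam τ σ2 D : ℝ) (hl : 0 < lam) (ht : 0 < τ) (hs : 0 < σ2)
    (hD : 0 < D) (hDs : D ≤ σ2) :
    τ * σ2 * (Real.log (max 1 (lam / τ)) - Real.log (σ2 / D)) ≤ lam * D - σ2 * min lam τ := by
  have hlogsD : Real.log (σ2 / D) = Real.log σ2 - Real.log D :=
    Real.log_div (ne_of_gt hs) (ne_of_gt hD)
  rcases le_or_gt lam τ with h | h
  · have hmax : max 1 (lam / τ) = 1 := max_eq_left (by rw [div_le_one ht]; exact h)
    have hmin : min lam τ = lam := min_eq_left h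
    rw [hmax, hmin, Real.log_one]
    have h1 : Real.log (D / σ2) ≤ D / σ2 - 1 :=
      Real.log_le_sub_one_of_pos (div_pos hD hs)
    have h2 : Real.log (D / σ2) = Real.log D - Real.log σ2 :=
      Real.log_div (ne_of_gt hD) (ne_of_gt hs)
    rw [h2] at h1
    have hd : D / σ2 - 1 = (D - σ2) / σ2 := by field_simp
    rw [hd] at h1
    have h1' : σ2 * (Real.log D - Real.log σ2) ≤ D - σ2 := by
      have h5 := mul_le_mul_of_nonneg_left h1 hs.le
      have e : σ2 * ((D - σ2) / σ2) = D - σ2 := by field_simp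
      linarith [e ▸ h5]
    rw [hlogsD]
    nlinarith [mul_le_mul_of_nonneg_left h1' ht.le,
      mul_nonneg (sub_nonneg.mpr h) (sub_nonneg.mpr hDs)]
  · have hmax : max 1 (lam / τ) = lam / τ := max_eq_right (by rw [le_div_iff₀ ht]; linarith)
    have hmin : min lam τ = τ := min_eq_right h.le
    rw [hmax, hmin]
    have hy : 0 < lam * D / (τ * σ2) := by positivity
    have h1 : Real.log (lam * D / (τ * σ2)) ≤ lam * D / (τ * σ2) - 1 :=
      Real.log_le_sub_one_of_pos hy
    have h2 : Real.log (lam * D / (τ * σ2)) =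
        Real.log lam + Real.log D - (Real.log τ + Real.log σ2) := by
      rw [Real.log_div (by positivity) (by positivity),
        Real.log_mul (ne_of_gt hl) (ne_of_gt hD),
        Real.log_mul (ne_of_gt ht) (ne_of_gt hs)]
    have h3 : Real.log (lam / τ) = Real.log lam - Real.log τ :=
      Real.log_div (ne_of_gt hl) (ne_of_gt ht)
    rw [h2] at h1
    have hts : 0 < τ * σ2 := mul_pos ht hs
    have h4 := mul_le_mul_of_nonneg_left h1 hts.le
    have e : τ * σ2 * (lam * D / (τ * σ2) - 1) = lam * D - τ * σ2 := by field_simp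
    rw [e] at h4
    rw [h3, hlogsD]
    nlinarith [h4]

/-- reverse waterfilling optimality: for any per-coordinate distortions
`0 < D_i ≤ σ²` whose rate `(1/(2n))·Σ_i log₂(σ²/D_i)` is at most
`R*(τ) = (1/(2n))·Σ_i log₂ max(1, λ_i/τ)`, the weighted distortion `(1/n)·Σ_i λ_i D_i`
is at least `D*(τ) = (σ²/n)·Σ_i min(λ_i, τ)`; moreover the choice
`D_i = σ²·min(1, τ/λ_i)` is feasible, meets the rate with equality, and attains `D*(τ)`. -/
theorem reverse_waterfilling_optimality {n : ℕ} (hn : 1 ≤ n)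
    (lam : Fin n → ℝ) (hlam : ∀ i, 0 < lam i)
    (σ2 : ℝ) (hσ2 : 0 < σ2) (τ : ℝ) (hτ : 0 < τ) :
    (∀ D : Fin n → ℝ, (∀ i, 0 < D i) → (∀ i, D i ≤ σ2) →
      (1 / (2 * (n : ℝ))) * ∑ i, Real.logb 2 (σ2 / D i) ≤
        (1 / (2 * (n : ℝ))) * ∑ i, Real.logb 2 (max 1 (lam i / τ)) →
      (σ2 / (n : ℝ)) * ∑ i, min (lam i) τ ≤ (1 / (n : ℝ)) * ∑ i, lam i * D i) ∧
    (∀ i, 0 < σ2 * min 1 (τ / lam i)) ∧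
    (∀ i, σ2 * min 1 (τ / lam i) ≤ σ2) ∧
    ((1 / (2 * (n : ℝ))) * ∑ i, Real.logb 2 (σ2 / (σ2 * min 1 (τ / lam i))) =
      (1 / (2 * (n : ℝ))) * ∑ i, Real.logb 2 (max 1 (lam i / τ))) ∧
    ((1 / (n : ℝ)) * ∑ i, lam i * (σ2 * min 1 (τ / lam i)) =
      (σ2 / (n : ℝ)) * ∑ i, min (lam i) τ) := by
  have hnR : (0 : ℝ) < (n : ℝ) := by exact_mod_cast hn
  refine ⟨?_, ?_, ?_, ?_, ?_⟩
  · intro D hDpos hDle hR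
    -- cancel the positive factor 1/(2n)
    have hc : (0 : ℝ) < 1 / (2 * (n : ℝ)) := by positivity
    have hR1 : ∑ i, Real.logb 2 (σ2 / D i) ≤ ∑ i, Real.logb 2 (max 1 (lam i / τ)) :=
      le_of_mul_le_mul_left (by linarith [hR]) hc
    have hlog2 : (0 : ℝ) < Real.log 2 := Real.log_pos one_lt_two
    have hR2 : ∑ i, Real.log (σ2 / D i) ≤ ∑ i, Real.log (max 1 (lam i / τ)) := by
      have e1 : ∑ i, Real.logb 2 (σ2 / D i) = (∑ i, Real.log (σ2 / D i)) / Real.log 2 := by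
        simp [Real.logb, Finset.sum_div]
      have e2 : ∑ i, Real.logb 2 (max 1 (lam i / τ))
          = (∑ i, Real.log (max 1 (lam i / τ))) / Real.log 2 := by
        simp [Real.logb, Finset.sum_div]
      rw [e1, e2] at hR1
      exact (div_le_div_iff_of_pos_right hlog2).mp hR1
    have hsum : ∑ i, τ * σ2 * (Real.log (max 1 (lam i / τ)) - Real.log (σ2 / D i))
        ≤ ∑ i, (lam i * D i - σ2 * min (lam i) τ) :=
      Finset.sum_le_sum fun i _ =>
        percoord_rw (lam i) τ σ2 (D i) (hlam i) hτ hσ2 (hDpos i) (hDle i)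
    rw [← Finset.mul_sum, Finset.sum_sub_distrib] at hsum
    rw [Finset.sum_sub_distrib, ← Finset.mul_sum] at hsum
    have h0 : 0 ≤ τ * σ2 * ((∑ i, Real.log (max 1 (lam i / τ))) - ∑ i, Real.log (σ2 / D i)) := by
      have := sub_nonneg.mpr hR2
      positivity
    have hkey : σ2 * ∑ i, min (lam i) τ ≤ ∑ i, lam i * D i := by linarith
    have h5 : (σ2 * ∑ i, min (lam i) τ) / (n : ℝ) ≤ (∑ i, lam i * D i) / (n : ℝ) :=
      (div_le_div_iff_of_pos_right hnR).mpr hkey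
    calc (σ2 / (n : ℝ)) * ∑ i, min (lam i) τ
        = (σ2 * ∑ i, min (lam i) τ) / (n : ℝ) := by ring
      _ ≤ (∑ i, lam i * D i) / (n : ℝ) := h5
      _ = (1 / (n : ℝ)) * ∑ i, lam i * D i := by ring
  · intro i
    have : 0 < min 1 (τ / lam i) := lt_min one_pos (div_pos hτ (hlam i))
    positivity
  · intro i
    have := mul_le_of_le_one_right hσ2.le (min_le_left 1 (τ / lam i))
    simpa using this
  · congr 1
    apply Finset.sum_congr rfl
    intro i _
    congr 1
    rcases le_or_gt (lam i) τ with h | h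
    · have h1 : min 1 (τ / lam i) = 1 := min_eq_left (by rw [le_div_iff₀ (hlam i)]; linarith)
      have h2 : max 1 (lam i / τ) = 1 := max_eq_left (by rw [div_le_one hτ]; exact h)
      rw [h1, h2, mul_one, div_self (ne_of_gt hσ2)]
    · have h1 : min 1 (τ / lam i) = τ / lam i := min_eq_right (by rw [div_le_one (hlam i)]; linarith)
      have h2 : max 1 (lam i / τ) = lam i / τ := max_eq_right (by rw [le_div_iff₀ hτ]; linarith)
      rw [h1, h2]
      have hne := (hlam i).ne'
      field_simp
  · have e : ∀ i, lam i * (σ2 * min 1 (τ / lam i)) = σ2 * min (lam i) τ := by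
      intro i
      rcases le_or_gt (lam i) τ with h | h
      · have h1 : min 1 (τ / lam i) = 1 := min_eq_left (by rw [le_div_iff₀ (hlam i)]; linarith)
        rw [h1, min_eq_left h]; ring
      · have h1 : min 1 (τ / lam i) = τ / lam i :=
          min_eq_right (by rw [div_le_one (hlam i)]; linarith)
        rw [h1, min_eq_right h.le]
        have hne := (hlam i).ne'
        field_simp
    simp only [e]
    rw [← Finset.mul_sum]
    ring
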